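/- If Φ(0)·v₀ = 0, then for every x ∈ ℝ one has Φ(x)·(exp(−xΛ)·v₀) = 0; that is, the kernel vector evolves as v(x) = exp(−xΛ)·v₀, remaining in the kernel of Φ(x) for all x. -/

import Mathlib

open scoped BigOperators Matrix

namespace KernelEvolAux

variable {N : ℕ}

/-- The linear map `A ↦ (A *ᵥ v₀) c`. -/
noncomputable def L (v₀ : Fin N → ℂ) (c : Fin N) : Matrix (Fin N) (Fin N) ℂ →ₗ[ℂ] ℂ where
  toFun A := (A *ᵥ v₀) c
  map_add' A B := by simp [Matrix.add_mulVec]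
  map_smul' r A := by simp [Matrix.smul_mulVec]

/-- The linear map sending a matrix to its `mulVec` continuous linear map. -/
noncomputable def T (N : ℕ) :
    Matrix (Fin N) (Fin N) ℂ →ₗ[ℂ] ((Fin N → ℂ) →L[ℂ] (Fin N → ℂ)) where
  toFun A := LinearMap.toContinuousLinearMap A.mulVecLin
  map_add' A B := by
    ext y
    simp [Matrix.add_mulVec]
  map_smul' r A := by
    ext y
    simp [Matrix.smul_mulVec]

lemma comm (Λ : Matrix (Fin N) (Fin N) ℂ) (c : ℂ) :
    Λ * NormedSpace.exp (c • Λ) = NormedSpace.exp (c • Λ) * Λ := by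
  letI : NormedRing (Matrix (Fin N) (Fin N) ℂ) := Matrix.linftyOpNormedRing
  letI : NormedAlgebra ℂ (Matrix (Fin N) (Fin N) ℂ) := Matrix.linftyOpNormedAlgebra
  exact (((Commute.refl Λ).smul_right c).exp_right).eq

lemma derivE (Λ : Matrix (Fin N) (Fin N) ℂ) (v₀ : Fin N → ℂ) (c : Fin N) (x : ℝ) :
    HasDerivAt (fun y : ℝ => (NormedSpace.exp ((-(y : ℂ)) • Λ) *ᵥ v₀) c)
      (-(((NormedSpace.exp ((-(x : ℂ)) • Λ) * Λ) *ᵥ v₀) c)) x := by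
  letI : NormedRing (Matrix (Fin N) (Fin N) ℂ) := Matrix.linftyOpNormedRing
  letI : NormedAlgebra ℂ (Matrix (Fin N) (Fin N) ℂ) := Matrix.linftyOpNormedAlgebra
  letI : NormedSpace ℝ (Matrix (Fin N) (Fin N) ℂ) := NormedSpace.complexToReal
  have h1 : HasDerivAt (fun u : ℂ => NormedSpace.exp (u • Λ))
      (NormedSpace.exp ((-(x : ℂ)) • Λ) * Λ) (-(x : ℂ)) :=
    hasDerivAt_exp_smul_const Λ _
  have hc0 : HasDerivAt (fun y : ℝ => (y : ℂ)) 1 x := by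
    simpa using (hasDerivAt_id x).ofReal_comp
  have hc : HasDerivAt (fun y : ℝ => -(y : ℂ)) (-1) x := hc0.neg
  have h2 := HasDerivAt.scomp (𝕜 := ℝ) (𝕜' := ℂ) x h1 hc
  have h3 := (((LinearMap.toContinuousLinearMap (L v₀ c)).restrictScalars ℝ).hasFDerivAt).comp_hasDerivAt x h2
  have e : ∀ A, ((LinearMap.toContinuousLinearMap (L v₀ c)).restrictScalars ℝ) A = (A *ᵥ v₀) c :=
    fun A => rfl
  simp only [Function.comp_def, e] at h3
  refine h3.congr_deriv ?_
  change ((_ : Matrix (Fin N) (Fin N) ℂ) *ᵥ v₀) c = _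
  simp [neg_smul, one_smul, Matrix.neg_mulVec]

lemma lip (U : ℝ → Matrix (Fin N) (Fin N) ℂ)
    (hU : ∀ a b, Continuous fun x => U x a b) (a b : ℝ) :
    ∃ K : NNReal, ∀ t ∈ Set.Icc a b,
      LipschitzWith K (fun y : Fin N → ℂ => U t *ᵥ y) := by
  letI : NormedRing (Matrix (Fin N) (Fin N) ℂ) := Matrix.linftyOpNormedRing
  letI : NormedAlgebra ℂ (Matrix (Fin N) (Fin N) ℂ) := Matrix.linftyOpNormedAlgebra
  have hUc : Continuous U := continuous_pi fun i => continuous_pi fun j => hU i j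
  have hT : Continuous fun t => T N (U t) :=
    ((T N).continuous_of_finiteDimensional).comp hUc
  obtain ⟨C, hC⟩ := (isCompact_Icc (a := a) (b := b)).exists_bound_of_continuousOn
    hT.continuousOn
  refine ⟨C.toNNReal, fun t ht => ?_⟩
  have hlip := (T N (U t)).lipschitz
  have hle : ‖T N (U t)‖₊ ≤ C.toNNReal := by
    rw [← norm_toNNReal]
    exact Real.toNNReal_mono (hC t ht)
  have := hlip.weaken hle
  exact this

end KernelEvolAux

/-- If `Φ` solves the linear spectral equation
`Φ'(x) = Φ(x)Λ + U(x)Φ(x)` and `Φ(0)v₀ = 0`, then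
`Φ(x)·(exp(−xΛ)v₀) = 0` for all `x ∈ ℝ`. -/
theorem kernel_vector_evolution (N : ℕ) (hN : 1 ≤ N)
    (Λ : Matrix (Fin N) (Fin N) ℂ)
    (U : ℝ → Matrix (Fin N) (Fin N) ℂ)
    (hU : ∀ a b, Continuous fun x => U x a b)
    (Φ : ℝ → Matrix (Fin N) (Fin N) ℂ)
    (hΦ : ∀ x : ℝ, ∀ a b, HasDerivAt (fun y => Φ y a b)
      ((Φ x * Λ + U x * Φ x) a b) x)
    (v₀ : Fin N → ℂ)
    (hv₀ : Φ 0 *ᵥ v₀ = 0) :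
    ∀ x : ℝ, Φ x *ᵥ (NormedSpace.exp ((-(x : ℂ)) • Λ) *ᵥ v₀) = 0 := by
  set E : ℝ → Matrix (Fin N) (Fin N) ℂ :=
    fun y => NormedSpace.exp ((-(y : ℂ)) • Λ) with hE
  set w : ℝ → (Fin N → ℂ) := fun y => Φ y *ᵥ (E y *ᵥ v₀) with hw
  have mateq : ∀ t : ℝ,
      (Φ t * Λ + U t * Φ t) *ᵥ (E t *ᵥ v₀) - Φ t *ᵥ ((E t * Λ) *ᵥ v₀)
        = U t *ᵥ (Φ t *ᵥ (E t *ᵥ v₀)) := by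
    intro t
    have hcomm : Λ * E t = E t * Λ := KernelEvolAux.comm Λ _
    simp only [Matrix.mulVec_mulVec, ← hcomm, ← mul_assoc, add_mul, Matrix.add_mulVec]
    exact add_sub_cancel_left _ _
  have key : ∀ t : ℝ, HasDerivAt w (U t *ᵥ w t) t := by
    intro t
    rw [hasDerivAt_pi]
    intro i
    have hsum : HasDerivAt (fun y => ∑ c, Φ y i c * (E y *ᵥ v₀) c)
        (∑ c, ((Φ t * Λ + U t * Φ t) i c * (E t *ᵥ v₀) c
          + Φ t i c * (-(((E t * Λ) *ᵥ v₀) c)))) t :=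
      HasDerivAt.fun_sum fun c _ => (hΦ t i c).mul (KernelEvolAux.derivE Λ v₀ c t)
    have hD : (∑ c, ((Φ t * Λ + U t * Φ t) i c * (E t *ᵥ v₀) c
          + Φ t i c * (-(((E t * Λ) *ᵥ v₀) c))))
        = ((Φ t * Λ + U t * Φ t) *ᵥ (E t *ᵥ v₀)) i
          - (Φ t *ᵥ ((E t * Λ) *ᵥ v₀)) i := by
      simp [Matrix.mulVec, dotProduct, Finset.sum_add_distrib, mul_neg,
        sub_eq_add_neg, Finset.sum_neg_distrib]
    have hD2 : ((Φ t * Λ + U t * Φ t) *ᵥ (E t *ᵥ v₀)) i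
          - (Φ t *ᵥ ((E t * Λ) *ᵥ v₀)) i = (U t *ᵥ w t) i := by
      rw [← Pi.sub_apply, mateq t]
    rw [hD, hD2] at hsum
    exact hsum
  intro x
  obtain ⟨K, hK⟩ := KernelEvolAux.lip U hU (-(|x| + 1)) (|x| + 1)
  have hclamp : ∀ t : ℝ,
      max (-(|x| + 1)) (min t (|x| + 1)) ∈ Set.Icc (-(|x| + 1)) (|x| + 1) := by
    intro t
    refine ⟨le_max_left _ _, max_le (by linarith [abs_nonneg x]) (min_le_right _ _)⟩
  have hv : ∀ t : ℝ, LipschitzOnWith K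
      (fun y : Fin N → ℂ => U (max (-(|x| + 1)) (min t (|x| + 1))) *ᵥ y) Set.univ :=
    fun t => (hK _ (hclamp t)).lipschitzOnWith
  have heq : Set.EqOn w (fun _ => (0 : Fin N → ℂ))
      (Set.Icc (-(|x| + 1)) (|x| + 1)) := by
    apply ODE_solution_unique_of_mem_Icc
      (v := fun t y => U (max (-(|x| + 1)) (min t (|x| + 1))) *ᵥ y)
      (s := fun _ => Set.univ) (fun t _ => hv t)
      (t₀ := 0) (ht := Set.mem_Ioo.mpr ⟨by linarith [abs_nonneg x], by linarith [abs_nonneg x]⟩)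
    · exact Continuous.continuousOn
        (continuous_iff_continuousAt.2 fun t => (key t).continuousAt)
    · intro t ht
      have hclampt : max (-(|x| + 1)) (min t (|x| + 1)) = t := by
        rw [min_eq_left ht.2.le, max_eq_right ht.1.le]
      rw [hclampt]
      exact key t
    · exact fun t _ => Set.mem_univ _
    · exact continuousOn_const
    · intro t ht
      simpa [Matrix.mulVec_zero] using hasDerivAt_const t (0 : Fin N → ℂ)
    · exact fun t _ => Set.mem_univ _
    · have : w 0 = 0 := by
        have hE0 : E 0 = 1 := by
          rw [hE]
          simp [NormedSpace.exp_zero]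
        rw [hw]
        simp only []
        rw [hE0] at *
        simp [hE0, Matrix.one_mulVec, hv₀]
      simpa using this
  exact heq (Set.mem_Icc.mpr ⟨by linarith [neg_abs_le x], by linarith [le_abs_self x]⟩)
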